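/- Let G be a graph and H = L(G) its line graph. Then every vertex of H has functionality at most 6 in H; consequently, since the class of line graphs is hereditary, fun(L(G)) ≤ 6 for every graph G. -/

import Mathlib

open scoped Classical

/-- The Boolean adjacency indicator of a graph. -/
noncomputable def adjB {V : Type*} (G : SimpleGraph V) (x z : V) : Bool :=
  if G.Adj x z then true else false

/-- A vertex `y` is a function of the set `S` of vertices: there is a Boolean
function `f` of the variables indexed by `S` such that the adjacency of `y`
to any vertex `z` outside `{y} ∪ S` equals `f` applied to the adjacencies
of the members of `S` to `z`. -/
def FunctionOf {V : Type*} (G : SimpleGraph V) (y : V) (S : Finset V) : Prop :=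
  y ∉ S ∧ ∃ f : (S → Bool) → Bool, ∀ z, z ≠ y → z ∉ S →
    (G.Adj y z ↔ f (fun s => adjB G s.1 z) = true)

/-- `fun(y) ≤ k` : the functionality of vertex `y` is at most `k`. -/
def VertexFunLE {V : Type*} (G : SimpleGraph V) (y : V) (k : ℕ) : Prop :=
  ∃ S : Finset V, S.card ≤ k ∧ FunctionOf G y S


/-- `fun(G) ≤ k`: every (nonempty) induced subgraph of `G` has a vertex of
functionality at most `k`. -/
def GraphFunLE {V : Type*} (G : SimpleGraph V) (k : ℕ) : Prop :=
  ∀ W : Set V, W.Nonempty → ∃ y : W, VertexFunLE (G.induce W) y k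

/-- Auxiliary: choose up to 3 edges through `a` (other than `x`); membership of `a`
in another edge is determined by adjacency to all of them (when there are 3). -/
lemma aux_choose {V α : Type*} [DecidableEq V] [Fintype α]
    (H : SimpleGraph α) (e : α → Sym2 V) (he : Function.Injective e)
    (hadj : ∀ u v : α, H.Adj u v ↔ e u ≠ e v ∧ ∃ w, w ∈ e u ∧ w ∈ e v)
    (x : α) (a : V) :
    ∃ Y : Finset α, Y.card ≤ 3 ∧ (∀ y ∈ Y, y ≠ x ∧ a ∈ e y) ∧
      ∀ z, z ≠ x → z ∉ Y → (a ∈ e z ↔ (Y.card = 3 ∧ ∀ y ∈ Y, H.Adj y z)) := by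
  classical
  set A : Finset α := Finset.univ.filter (fun u => u ≠ x ∧ a ∈ e u) with hA
  have hmemA : ∀ u, u ∈ A ↔ (u ≠ x ∧ a ∈ e u) := by
    intro u; simp [hA]
  obtain ⟨Y, hYA, hYcard⟩ : ∃ Y ⊆ A, Y.card = min 3 A.card :=
    Finset.exists_subset_card_eq (min_le_right _ _)
  refine ⟨Y, ?_, fun y hy => (hmemA y).1 (hYA hy), ?_⟩
  · rw [hYcard]; exact min_le_left _ _
  intro z hzx hzY
  constructor
  · intro haz
    have hzA : z ∈ A := (hmemA z).2 ⟨hzx, haz⟩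
    have h3 : Y.card = 3 := by
      rcases le_or_gt 3 A.card with h | h
      · rw [hYcard]; omega
      · -- then Y = A, but z ∈ A \ Y, contradiction
        have : Y = A := Finset.eq_of_subset_of_card_le hYA (by rw [hYcard]; omega)
        exact absurd (this ▸ hzA) hzY
    refine ⟨h3, fun y hy => ?_⟩
    have hay : a ∈ e y := ((hmemA y).1 (hYA hy)).2
    rw [hadj]
    refine ⟨fun hcon => ?_, a, hay, haz⟩
    exact hzY (he hcon ▸ hy)
  · rintro ⟨h3, hall⟩
    by_contra haz
    -- each y ∈ Y meets e z at a vertex w y ≠ a, and e y = s(a, w y)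
    have hw : ∀ y ∈ Y, ∃ w, w ∈ e z ∧ e y = s(a, w) := by
      intro y hy
      obtain ⟨hne, w, hwy, hwz⟩ := (hadj y z).1 (hall y hy)
      have hwa : a ≠ w := fun h => haz (h ▸ hwz)
      have hay : a ∈ e y := ((hmemA y).1 (hYA hy)).2
      exact ⟨w, hwz, ((Sym2.mem_and_mem_iff hwa).1 ⟨hay, hwy⟩)⟩
    choose w hwz hwey using hw
    obtain ⟨c, d, hcd⟩ : ∃ c d, e z = s(c, d) := by
      induction (e z) using Sym2.ind with
      | _ c d => exact ⟨c, d, rfl⟩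
    have hinj : ∀ y₁ (h₁ : y₁ ∈ Y), ∀ y₂ (h₂ : y₂ ∈ Y),
        w y₁ h₁ = w y₂ h₂ → y₁ = y₂ := by
      intro y₁ h₁ y₂ h₂ hww
      apply he
      rw [hwey y₁ h₁, hwey y₂ h₂, hww]
    -- map Y injectively into {c, d}
    have hcard : Y.card ≤ ({c, d} : Finset V).card := by
      apply Finset.card_le_card_of_injOn (fun y => if h : y ∈ Y then w y h else a)
      · intro y hy
        simp only [hy, dif_pos]
        have := hwz y hy
        rw [hcd] at this
        simp only [Finset.mem_coe.1 hy, dif_pos, Finset.coe_insert, Finset.coe_singleton, Set.mem_insert_iff, Set.mem_singleton_iff, Finset.mem_insert, Finset.mem_singleton]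
        rcases Sym2.mem_iff.1 this with h | h
        · exact Or.inl h
        · exact Or.inr h
      · intro y₁ h₁ y₂ h₂ hww
        simp only [Finset.mem_coe] at h₁ h₂
        simp only [h₁, h₂, dif_pos] at hww
        exact hinj y₁ h₁ y₂ h₂ hww
    have : ({c, d} : Finset V).card ≤ 2 :=
      (Finset.card_insert_le _ _).trans (by simp)
    omega

lemma key {V α : Type*} [DecidableEq V] [Fintype α]
    (H : SimpleGraph α) (e : α → Sym2 V) (he : Function.Injective e)
    (hadj : ∀ u v : α, H.Adj u v ↔ e u ≠ e v ∧ ∃ w, w ∈ e u ∧ w ∈ e v)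
    (x : α) : VertexFunLE H x 6 := by
  classical
  obtain ⟨a, b, hab⟩ : ∃ a b, e x = s(a, b) := by
    induction (e x) using Sym2.ind with
    | _ a b => exact ⟨a, b, rfl⟩
  obtain ⟨Y, hY3, hYmem, hYiff⟩ := aux_choose H e he hadj x a
  obtain ⟨Z, hZ3, hZmem, hZiff⟩ := aux_choose H e he hadj x b
  refine ⟨Y ∪ Z, (Finset.card_union_le _ _).trans (by omega), ?_, ?_⟩
  · intro hx
    rcases Finset.mem_union.1 hx with h | h
    · exact (hYmem x h).1 rfl
    · exact (hZmem x h).1 rfl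
  refine ⟨fun g => if (Y.card = 3 ∧ ∀ s : (Y ∪ Z : Finset α), s.1 ∈ Y → g s = true) ∨
      (Z.card = 3 ∧ ∀ s : (Y ∪ Z : Finset α), s.1 ∈ Z → g s = true) then true else false,
    fun z hzx hzS => ?_⟩
  have hzY : z ∉ Y := fun h => hzS (Finset.mem_union_left _ h)
  have hzZ : z ∉ Z := fun h => hzS (Finset.mem_union_right _ h)
  have hadjB : ∀ u, adjB H u z = true ↔ H.Adj u z := by
    intro u; simp [adjB]
  have hstep : H.Adj x z ↔ (a ∈ e z ∨ b ∈ e z) := by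
    rw [hadj]
    constructor
    · rintro ⟨-, w, hwx, hwz⟩
      rw [hab, Sym2.mem_iff] at hwx
      rcases hwx with rfl | rfl
      · exact Or.inl hwz
      · exact Or.inr hwz
    · intro h
      have hne : e x ≠ e z := fun hcon => hzx (he hcon).symm
      rcases h with h | h
      · exact ⟨hne, a, by rw [hab]; simp, h⟩
      · exact ⟨hne, b, by rw [hab]; simp, h⟩
  rw [hstep, hYiff z hzx hzY, hZiff z hzx hzZ]
  have hYtrans : (∀ y ∈ Y, H.Adj y z) ↔
      (∀ s : (Y ∪ Z : Finset α), s.1 ∈ Y → adjB H s.1 z = true) := by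
    constructor
    · intro h s hs; exact (hadjB _).2 (h _ hs)
    · intro h y hy; exact (hadjB _).1 (h ⟨y, Finset.mem_union_left _ hy⟩ hy)
  have hZtrans : (∀ y ∈ Z, H.Adj y z) ↔
      (∀ s : (Y ∪ Z : Finset α), s.1 ∈ Z → adjB H s.1 z = true) := by
    constructor
    · intro h s hs; exact (hadjB _).2 (h _ hs)
    · intro h y hy; exact (hadjB _).1 (h ⟨y, Finset.mem_union_right _ hy⟩ hy)
  rw [hYtrans, hZtrans]
  beta_reduce
  split_ifs with h
  · exact iff_of_true h rfl
  · exact iff_of_false h (by simp)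

/-- Every vertex of the line graph `L(G)` has functionality at most 6 in `L(G)`;
consequently (the class of line graphs being hereditary) `fun(L(G)) ≤ 6`. -/
theorem stmt14 {V : Type*} [Fintype V] [DecidableEq V] (G : SimpleGraph V)
    [DecidableRel G.Adj] :
    (∀ x : G.edgeSet, VertexFunLE G.lineGraph x 6) ∧ GraphFunLE G.lineGraph 6 := by
  classical
  constructor
  · intro x
    refine key G.lineGraph (fun u => (u : Sym2 V)) Subtype.val_injective ?_ x
    intro u v
    rw [SimpleGraph.lineGraph_adj_iff_exists]
    simp [Subtype.ext_iff, Set.Nonempty]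
  · intro W hW
    obtain ⟨y, hy⟩ := hW
    haveI : Fintype ↥W := Set.Finite.fintype (Set.toFinite W)
    refine ⟨⟨y, hy⟩, ?_⟩
    refine key (G.lineGraph.induce W) (fun u : ↥W => ((u : G.edgeSet) : Sym2 V))
      (fun u v h => by apply Subtype.ext; apply Subtype.ext; exact h) ?_ ⟨y, hy⟩
    intro u v
    show G.lineGraph.Adj u.1 v.1 ↔ _
    rw [SimpleGraph.lineGraph_adj_iff_exists]
    simp [Subtype.ext_iff, Set.Nonempty]
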